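/- Let h = ⊕_{i≥0} h(i) be an N-graded Lie algebra over an algebraically closed field k of characteristic 0, with h₊ := ⊕_{i≥1} h(i) ≠ 0, and H the corresponding connected algebraic group. Suppose h₊ is a faithful h(0)-module and there is a (semisimple) element x ∈ h(0) such that [x,y] = j·y for every j and every y ∈ h(j). Then the algebra of regular invariants of the coadjoint representation is trivial: k[h*]^H = k. -/

import Mathlib

noncomputable section

open scoped Classical

/-! ### Generalities: Zariski-type notions on a vector space, stabilisers,
generic stabilisers, tori, invariant fields and algebras. -/

/-- The algebra of polynomial functions on a `k`-vector space `V`, realised as the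
subalgebra of `V → k` generated by the linear functionals. -/
def polyFuns (k V : Type) [CommRing k] [AddCommGroup V] [Module k V] :
    Subalgebra k (V → k) :=
  Algebra.adjoin k (Set.range fun φ : Module.Dual k V => (φ : V → k))

/-- A subset of a vector space is Zariski open if it is a union of complements of
zero loci of polynomial functions. -/
def ZOpen (k V : Type) [CommRing k] [AddCommGroup V] [Module k V] (U : Set V) : Prop :=
  ∃ F : Set (V → k), (∀ f ∈ F, f ∈ polyFuns k V) ∧ U = {v | ∃ f ∈ F, f v ≠ 0}

/-- A dense open subset of `V` (for the Zariski topology on the irreducible variety `V`,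
density of an open subset is equivalent to nonemptiness). -/
def ZDenseOpen (k V : Type) [CommRing k] [AddCommGroup V] [Module k V] (U : Set V) : Prop :=
  ZOpen k V U ∧ U.Nonempty

/-- A subset of `V` is Zariski dense iff the only polynomial function vanishing
identically on it is zero. -/
def ZDense (k V : Type) [CommRing k] [AddCommGroup V] [Module k V] (S : Set V) : Prop :=
  ∀ f ∈ polyFuns k V, (∀ v ∈ S, f v = 0) → f = (0 : V → k)

/-- Stabiliser subgroup of a vector under a linear representation. -/
def repStabilizer {k G V : Type} [CommSemiring k] [Group G] [AddCommMonoid V] [Module k V]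
    (ρ : Representation k G V) (v : V) : Subgroup G where
  carrier := {g | ρ g v = v}
  one_mem' := by simp
  mul_mem' := by
    intro a b ha hb
    simp only [Set.mem_setOf_eq, map_mul, Module.End.mul_apply] at *
    rw [hb, ha]
  inv_mem' := by
    intro g hg
    simp only [Set.mem_setOf_eq] at *
    conv_lhs => rw [← hg]
    rw [← Module.End.mul_apply, ← map_mul, inv_mul_cancel, map_one, Module.End.one_apply]

/-- Two subgroups are conjugate. -/
def ConjSubgroups {G : Type} [Group G] (A B : Subgroup G) : Prop :=
  ∃ g : G, B = A.map (MulAut.conj g).toMonoidHom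

/-- `v` is a generic point for the representation `ρ`: it belongs to a dense open set on
which all stabilisers are conjugate (to that of `v`). -/
def IsGenericVec {k G V : Type} [CommRing k] [Group G] [AddCommGroup V] [Module k V]
    (ρ : Representation k G V) (v : V) : Prop :=
  ∃ Ω : Set V, ZDenseOpen k V Ω ∧ v ∈ Ω ∧
    ∀ w ∈ Ω, ConjSubgroups (repStabilizer ρ v) (repStabilizer ρ w)

/-- The action defined by the representation `ρ` has a generic stabiliser: there is a dense
open subset on which all stabilisers are conjugate. -/
def HasGenericStabilizer {k G V : Type} [CommRing k] [Group G] [AddCommGroup V] [Module k V]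
    (ρ : Representation k G V) : Prop :=
  ∃ Ω : Set V, ZDenseOpen k V Ω ∧
    ∀ v ∈ Ω, ∀ w ∈ Ω, ConjSubgroups (repStabilizer ρ v) (repStabilizer ρ w)

/-- A group is a torus (over `k`) if it is isomorphic to a finite power of `kˣ`. -/
def IsTorus (k : Type) [Field k] (G : Type) [Group G] : Prop :=
  ∃ d : ℕ, Nonempty (G ≃* (Fin d → kˣ))

/-- A group has toral identity component: it contains a normal subgroup of finite
index which is a torus. -/
def HasToralIdentityComponent (k : Type) [Field k] (G : Type) [Group G] : Prop :=
  ∃ T : Subgroup G, T.Normal ∧ T.FiniteIndex ∧ IsTorus k ↥T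

/-! ### Polynomial and rational invariants -/

/-- The coordinate ring `k[V]` of a finite-dimensional vector space. -/
abbrev coordRing (k V : Type) [Field k] [AddCommGroup V] [Module k V] : Type :=
  MvPolynomial (Module.Free.ChooseBasisIndex k V) k

/-- Evaluation of a polynomial on `V` at a point of `V`. -/
def evalAt {k V : Type} [Field k] [AddCommGroup V] [Module k V] (v : V) :
    coordRing k V →ₐ[k] k :=
  MvPolynomial.aeval fun i => (Module.Free.chooseBasis k V).repr v i

/-- The field `k(V)` of rational functions on `V`. -/
abbrev RatFuncField (k V : Type) [Field k] [AddCommGroup V] [Module k V] : Type :=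
  FractionRing (coordRing k V)

/-- The field `k(V)^G` of `G`-invariant rational functions on `V`: a rational function
`q = p₁/p₂` is invariant iff `p₁(g·v) p₂(v) = p₁(v) p₂(g·v)` identically; the collection of
such elements is already a subfield, so taking the generated intermediate field is harmless. -/
def invRatField {k G V : Type} [Field k] [Group G] [AddCommGroup V] [Module k V]
    (ρ : Representation k G V) : IntermediateField k (RatFuncField k V) :=
  IntermediateField.adjoin k
    {q | ∃ p₁ p₂ : coordRing k V, p₂ ≠ 0 ∧
      q * algebraMap (coordRing k V) (RatFuncField k V) p₂ =
        algebraMap (coordRing k V) (RatFuncField k V) p₁ ∧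
      ∀ (g : G) (v : V), evalAt (ρ g v) p₁ * evalAt v p₂ = evalAt v p₁ * evalAt (ρ g v) p₂}

/-- The algebra `k[V]^G` of `G`-invariant polynomial functions on `V` (the invariant
polynomials already form a subalgebra, so taking the generated subalgebra is harmless). -/
def invPolyAlg {k G V : Type} [Field k] [Group G] [AddCommGroup V] [Module k V]
    (ρ : Representation k G V) : Subalgebra k (coordRing k V) :=
  Algebra.adjoin k {p | ∀ (g : G) (v : V), evalAt (ρ g v) p = evalAt v p}

/-- A field extension `K/k` is rational (purely transcendental, finitely generated). -/
def IsRationalExt (k K : Type) [Field k] [Field K] [Algebra k K] : Prop :=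
  ∃ (n : ℕ) (f : Fin n → K), AlgebraicIndependent k f ∧
    IntermediateField.adjoin k (Set.range f) = ⊤

/-- `L` is a purely transcendental extension of `K` (inside the category of
`k`-extensions). -/
def IsPurelyTranscExtOf (k K L : Type) [Field k] [Field K] [Field L] [Algebra k K]
    [Algebra k L] : Prop :=
  ∃ (e : K →ₐ[k] L) (n : ℕ) (f : Fin n → L),
    letI : Algebra K L := e.toRingHom.toAlgebra
    AlgebraicIndependent K f ∧ IntermediateField.adjoin K (Set.range f) = ⊤

end

noncomputable section

open scoped Classical

/-! ### Lie-theoretic generalities -/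

/-- The stabiliser `q_ξ = {x ∈ q | ξ([x,y]) = 0 ∀ y}` of a linear functional `ξ` under the
coadjoint representation of a Lie algebra. -/
def coadjointStab (k : Type) {L : Type} [CommRing k] [LieRing L] [LieAlgebra k L]
    (ξ : Module.Dual k L) : Submodule k L where
  carrier := {x | ∀ y, ξ ⁅x, y⁆ = 0}
  add_mem' := by
    intro a b ha hb y
    rw [add_lie, map_add, ha y, hb y, add_zero]
  zero_mem' := by intro y; rw [zero_lie, map_zero]
  smul_mem' := by
    intro c x hx y
    rw [smul_lie, map_smul, hx y, smul_zero]

/-- The index of a Lie algebra: minimal dimension of the stabiliser of a linear functional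
under the coadjoint representation. -/
def lieIndex (k L : Type) [Field k] [LieRing L] [LieAlgebra k L] : ℕ :=
  ⨅ ξ : Module.Dual k L, Module.finrank k (coadjointStab k ξ)

/-- The representation of `G` on `Module.Dual k V` dual to a representation on `V`
(e.g. the coadjoint representation as the dual of the adjoint one). -/
def coadRep {k G V : Type} [CommRing k] [Group G] [AddCommGroup V] [Module k V]
    (ρ : Representation k G V) : Representation k G (Module.Dual k V) where
  toFun g := (ρ g⁻¹).dualMap
  map_one' := by
    ext φ x
    simp
  map_mul' g h := by
    ext φ x
    simp [mul_inv_rev, map_mul]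

@[simp] lemma coadRep_apply {k G V : Type} [CommRing k] [Group G] [AddCommGroup V]
    [Module k V] (ρ : Representation k G V) (g : G) (φ : Module.Dual k V) (x : V) :
    coadRep ρ g φ x = φ (ρ g⁻¹ x) := rfl

/-- Restriction of a representation to a subgroup acting on an invariant subspace. -/
def subRep {k G V : Type} [CommRing k] [Group G] [AddCommGroup V] [Module k V]
    (ρ : Representation k G V) (K : Subgroup G) (W : Submodule k V)
    (hW : ∀ g : K, ∀ x ∈ W, ρ (g : G) x ∈ W) : Representation k K W where
  toFun g := (ρ (g : G)).restrict (hW g)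
  map_one' := by
    ext x
    simp [LinearMap.restrict_apply]
  map_mul' g h := by
    ext x
    simp [LinearMap.restrict_apply, map_mul]

@[simp] lemma subRep_apply_coe {k G V : Type} [CommRing k] [Group G] [AddCommGroup V]
    [Module k V] (ρ : Representation k G V) (K : Subgroup G) (W : Submodule k V)
    (hW : ∀ g : K, ∀ x ∈ W, ρ (g : G) x ∈ W) (g : K) (x : W) :
    (subRep ρ K W hW g x : V) = ρ (g : G) (x : V) := rfl

/-- Abstract surrogate for a connected algebraic group with Lie algebra `L`, given by its
adjoint representation: every `Ad g` is a Lie algebra automorphism, the group has no proper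
subgroup of finite index (connectedness), and the exponential of every nilpotent inner
derivation is realised by the adjoint action of some group element. -/
structure ConnAlgGroupOf (k L : Type) [Field k] [LieRing L] [LieAlgebra k L]
    [Module.Finite k L] where
  G : Type
  [grp : Group G]
  Ad : Representation k G L
  ad_bracket : ∀ (g : G) (x y : L), Ad g ⁅x, y⁆ = ⁅Ad g x, Ad g y⁆
  connected : ∀ K : Subgroup G, K.FiniteIndex → K = ⊤
  exp_mem : ∀ y : L, IsNilpotent ((LieAlgebra.ad k L) y) →
    ∃ g : G, Ad g = ∑ i ∈ Finset.range (Module.finrank k L + 1),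
      ((i.factorial : k)⁻¹) • (((LieAlgebra.ad k L) y) ^ i)

attribute [instance] ConnAlgGroupOf.grp

/-! ### Borel, parabolic and seaweed subalgebras -/

/-- A Borel subalgebra: a maximal solvable Lie subalgebra. -/
def IsBorelSub (k : Type) {g : Type} [Field k] [LieRing g] [LieAlgebra k g]
    (b : LieSubalgebra k g) : Prop :=
  LieAlgebra.IsSolvable ↥b ∧
    ∀ c : LieSubalgebra k g, LieAlgebra.IsSolvable ↥c → b ≤ c → b = c

/-- A parabolic subalgebra: one containing a Borel subalgebra. -/
def IsParabolicSub (k : Type) {g : Type} [Field k] [LieRing g] [LieAlgebra k g]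
    (p : LieSubalgebra k g) : Prop :=
  ∃ b : LieSubalgebra k g, IsBorelSub k b ∧ b ≤ p

/-- A seaweed subalgebra: the intersection of two weakly opposite parabolic subalgebras
(parabolics `p`, `p'` with `p + p' = g`). -/
def IsSeaweedSub (k : Type) {g : Type} [Field k] [LieRing g] [LieAlgebra k g]
    (s : LieSubalgebra k g) : Prop :=
  ∃ p p' : LieSubalgebra k g, IsParabolicSub k p ∧ IsParabolicSub k p' ∧
    p.toSubmodule ⊔ p'.toSubmodule = ⊤ ∧ s = p ⊓ p'

end

noncomputable section


/-! ### Auxiliary polynomial lemmas -/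

section AuxPoly

variable {k ι : Type} [CommRing k] [Fintype ι]

set_option maxRecDepth 8000

open Polynomial in
lemma auxChainRule (g : ι → Polynomial k) (f : MvPolynomial ι k) :
    Polynomial.derivative (MvPolynomial.aeval g f) =
      ∑ idx : ι, (MvPolynomial.aeval g (MvPolynomial.pderiv idx f)) *
        Polynomial.derivative (g idx) := by
  induction f using MvPolynomial.induction_on with
  | C a => simp
  | add f₁ f₂ h₁ h₂ =>
      simp only [map_add, h₁, h₂, add_mul, Finset.sum_add_distrib]
  | mul_X f j h =>
      have h2 : ∑ x : ι, (MvPolynomial.aeval (R := k) g f *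
          MvPolynomial.aeval (R := k) g (MvPolynomial.pderiv x (MvPolynomial.X j))) *
            derivative (g x)
          = MvPolynomial.aeval (R := k) g f * derivative (g j) := by
        rw [Finset.sum_eq_single j]
        · simp
        · intro i _ hij
          simp [MvPolynomial.pderiv_X_of_ne (Ne.symm hij)]
        · simp
      simp only [map_mul, MvPolynomial.aeval_X, Polynomial.derivative_mul, h,
        MvPolynomial.pderiv_mul, map_add, add_mul, Finset.sum_add_distrib, map_mul, h2]
      rw [Finset.sum_mul]
      refine congrArg (· + _) ?_
      exact Finset.sum_congr rfl fun i _ => by ring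

open Polynomial in
lemma auxCurveEval (r : ℕ → ι → k) (M : ℕ) (f : MvPolynomial ι k) (s : k) :
    Polynomial.eval s (MvPolynomial.aeval
        (fun idx => ∑ i ∈ Finset.range M, Polynomial.C (r i idx) * Polynomial.X ^ i) f) =
      MvPolynomial.eval (fun idx => ∑ i ∈ Finset.range M, s ^ i * r i idx) f := by
  have := MvPolynomial.comp_aeval (R := k) (σ := ι)
    (f := fun idx => ∑ i ∈ Finset.range M, Polynomial.C (r i idx) * Polynomial.X ^ i)
    (φ := Polynomial.aeval s)
  have h2 := congrArg (fun φ => φ f) this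
  simp only [AlgHom.coe_comp, Function.comp_apply] at h2
  rw [Polynomial.coe_aeval_eq_eval] at h2
  rw [h2]
  rw [show (fun i => Polynomial.eval s
        (∑ i_1 ∈ Finset.range M, Polynomial.C (r i_1 i) * Polynomial.X ^ i_1))
      = (fun idx => ∑ i ∈ Finset.range M, s ^ i * r i idx) from funext fun idx => by
        rw [Polynomial.eval_finset_sum]
        exact Finset.sum_congr rfl fun i _ => by
          rw [Polynomial.eval_mul, Polynomial.eval_C, Polynomial.eval_pow, Polynomial.eval_X,
            mul_comm]]
  rfl

open Polynomial in
lemma auxCurveDerivEval (r : ℕ → ι → k) (M : ℕ) (f : MvPolynomial ι k) (s : k) :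
    Polynomial.eval s (Polynomial.derivative (MvPolynomial.aeval
        (fun idx => ∑ i ∈ Finset.range M, Polynomial.C (r i idx) * Polynomial.X ^ i) f)) =
      ∑ idx : ι, MvPolynomial.eval (fun jdx => ∑ i ∈ Finset.range M, s ^ i * r i jdx)
          (MvPolynomial.pderiv idx f) *
        Polynomial.eval s (Polynomial.derivative
          (∑ i ∈ Finset.range M, Polynomial.C (r i idx) * Polynomial.X ^ i)) := by
  rw [auxChainRule, Polynomial.eval_finset_sum]
  exact Finset.sum_congr rfl fun idx _ => by rw [Polynomial.eval_mul, auxCurveEval]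

lemma auxSumZeroPow (r : ℕ → ι → k) (M : ℕ) (hM : 1 ≤ M) (jdx : ι) :
    ∑ i ∈ Finset.range M, (0:k) ^ i * r i jdx = r 0 jdx := by
  rw [Finset.sum_eq_single 0]
  · simp
  · intro i _ hi
    rw [zero_pow hi, zero_mul]
  · intro h
    exact absurd (Finset.mem_range.2 hM) h

open Polynomial in
lemma auxDerivGZero (r : ℕ → ι → k) (M : ℕ) (hM : 2 ≤ M) (idx : ι) :
    Polynomial.eval 0 (Polynomial.derivative
        (∑ i ∈ Finset.range M, Polynomial.C (r i idx) * Polynomial.X ^ i)) = r 1 idx := by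
  rw [map_sum, Polynomial.eval_finset_sum, Finset.sum_eq_single 1]
  · simp
  · intro i _ hi
    rw [Polynomial.derivative_C_mul_X_pow]
    rcases Nat.eq_zero_or_pos i with h0 | h1
    · subst h0; simp
    · have : i - 1 ≠ 0 := by omega
      simp [zero_pow this]
  · intro h
    exact absurd (Finset.mem_range.2 hM) h

open Polynomial in
lemma auxDerivZero (r : ℕ → ι → k) (M : ℕ) (hM : 2 ≤ M) (f : MvPolynomial ι k) :
    Polynomial.eval 0 (Polynomial.derivative (MvPolynomial.aeval
        (fun idx => ∑ i ∈ Finset.range M, Polynomial.C (r i idx) * Polynomial.X ^ i) f)) =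
      ∑ idx : ι, MvPolynomial.eval (r 0) (MvPolynomial.pderiv idx f) * r 1 idx := by
  rw [auxCurveDerivEval]
  refine Finset.sum_congr rfl fun idx _ => ?_
  rw [auxDerivGZero r M hM idx]
  congr 1
  exact congrArg (fun v => MvPolynomial.eval v _) (funext (auxSumZeroPow r M (by omega)))

open Polynomial in
lemma auxDerivLinear (r : ℕ → ι → k) (f : MvPolynomial ι k) (s : k) :
    Polynomial.eval s (Polynomial.derivative (MvPolynomial.aeval
        (fun idx => ∑ i ∈ Finset.range 2, Polynomial.C (r i idx) * Polynomial.X ^ i) f)) =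
      ∑ idx : ι, MvPolynomial.eval (fun jdx => r 0 jdx + s * r 1 jdx)
          (MvPolynomial.pderiv idx f) * r 1 idx := by
  rw [auxCurveDerivEval]
  refine Finset.sum_congr rfl fun idx _ => ?_
  have h1 : (fun jdx => ∑ i ∈ Finset.range 2, s ^ i * r i jdx)
      = fun jdx => r 0 jdx + s * r 1 jdx := by
    funext jdx
    rw [Finset.sum_range_succ, Finset.sum_range_one]
    simp
  have h2 : Polynomial.eval s (Polynomial.derivative
      (∑ i ∈ Finset.range 2, Polynomial.C (r i idx) * Polynomial.X ^ i)) = r 1 idx := by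
    rw [Finset.sum_range_succ, Finset.sum_range_one]
    simp
  rw [h1, h2]

end AuxPoly

/-! ### STATEMENT 4
Let `h = ⊕_{i ≥ 0} h(i)` be an `ℕ`-graded Lie algebra over an algebraically closed field `k`
of characteristic zero, with `h₊ := ⊕_{i ≥ 1} h(i) ≠ 0`, and `H` the corresponding connected
algebraic group.  Suppose `h₊` is a faithful `h(0)`-module, and that there is a (semisimple)
element `x ∈ h(0)` with `[x,y] = j • y` for all `j` and all `y ∈ h(j)`.  Then the algebra of
regular invariants of the coadjoint representation is trivial: `k[h*]^H = k`. -/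
set_option maxHeartbeats 3000000 in
theorem graded_no_regular_coadjoint_invariants
    (k L : Type) [Field k] [IsAlgClosed k] [CharZero k]
    [LieRing L] [LieAlgebra k L] [FiniteDimensional k L]
    (p : ℕ → Submodule k L)
    -- `ℕ`-grading of the Lie algebra `h`:
    (hsup : (⨆ i, p i) = ⊤)
    (hindep : ∀ i : ℕ, Disjoint (p i) (⨆ j ∈ {j : ℕ | j ≠ i}, p j))
    (hbracket : ∀ i j : ℕ, ∀ x ∈ p i, ∀ y ∈ p j, ⁅x, y⁆ ∈ p (i + j))
    -- `h₊ ≠ 0`: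
    (hplus_ne : (⨆ i ∈ {i : ℕ | 1 ≤ i}, p i) ≠ ⊥)
    -- `h₊` is a faithful `h(0)`-module:
    (hfaithful : ∀ x ∈ p 0, (∀ y ∈ (⨆ i ∈ {i : ℕ | 1 ≤ i}, p i), ⁅x, y⁆ = 0) → x = 0)
    -- the grading element `x ∈ h(0)`:
    (hgrelt : ∃ x ∈ p 0, ∀ j : ℕ, ∀ y ∈ p j, ⁅x, y⁆ = (j : k) • y)
    -- `H` is the corresponding connected algebraic group; in particular the adjoint action
    -- of `H` realises the one-parameter torus determined by the grading:
    (H : ConnAlgGroupOf k L)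
    (htorus : ∀ t : kˣ, ∃ g : H.G, ∀ j : ℕ, ∀ y ∈ p j, H.Ad g y = ((t : k) ^ j) • y) :
    invPolyAlg (coadRep H.Ad) = ⊥ := by
  classical
  -- independence and internal direct sum
  have hIndep : iSupIndep p := fun i => hindep i
  have hInt : DirectSum.IsInternal p :=
    DirectSum.isInternal_submodule_of_iSupIndep_of_iSup_eq_top hIndep hsup
  set e := LinearEquiv.ofBijective (DirectSum.coeLinearMap p) hInt with he
  -- the graded projections
  set π : ℕ → L →ₗ[k] L := fun j =>
    (p j).subtype ∘ₗ (DFinsupp.lapply j : DirectSum ℕ (fun i => ↥(p i)) →ₗ[k] ↥(p j)) ∘ₗ e.symm.toLinearMap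
    with hπdef
  have hπ_mem : ∀ j x, π j x ∈ p j := fun j x => (e.symm x j).2
  have hπ_same : ∀ j x, x ∈ p j → π j x = x := by
    intro j x hx
    have h1 : (e.symm x) j = ⟨x, hx⟩ := hInt.ofBijective_coeLinearMap_of_mem (i := j) hx
    simp only [hπdef, LinearMap.coe_comp, Function.comp_apply, LinearEquiv.coe_coe,
      DFinsupp.lapply_apply, Submodule.coe_subtype]
    exact congrArg Subtype.val h1
  have hπ_ne : ∀ i j, i ≠ j → ∀ x, x ∈ p i → π j x = 0 := by
    intro i j hij x hx
    have h1 : (e.symm x) j = 0 := hInt.ofBijective_coeLinearMap_of_mem_ne (i := i) (j := j) hij hx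
    simp only [hπdef, LinearMap.coe_comp, Function.comp_apply, LinearEquiv.coe_coe,
      DFinsupp.lapply_apply, Submodule.coe_subtype]
    exact congrArg Subtype.val h1
  -- finitely many grades
  obtain ⟨N, hN⟩ : ∃ N : ℕ, ∀ j, N < j → p j = ⊥ := by
    have hfin : Set.Finite {j | p j ≠ ⊥} := WellFoundedGT.finite_ne_bot_of_iSupIndep hIndep
    refine ⟨hfin.toFinset.sup id, fun j hj => ?_⟩
    by_contra hb
    exact absurd (Finset.le_sup (f := id) (hfin.mem_toFinset.2 hb)) (not_le.2 hj)
  -- extensionality of linear maps along the grading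
  have hspan : ∀ A B : L →ₗ[k] L, (∀ i, ∀ x ∈ p i, A x = B x) → A = B := by
    intro A B h
    have htop : (⊤ : Submodule k L) ≤ LinearMap.eqLocus A B := by
      rw [← hsup]
      exact iSup_le fun i x hx => h i x hx
    exact LinearMap.ext fun x => htop trivial
  have hsum : ∀ x : L, ∑ j ∈ Finset.range (N + 1), π j x = x := by
    have := hspan (∑ j ∈ Finset.range (N + 1), π j) LinearMap.id ?_
    · intro x
      have h2 := congrArg (fun F : L →ₗ[k] L => F x) this
      simpa using h2
    · intro i x hx
      simp only [LinearMap.coe_sum, Finset.sum_apply, LinearMap.id_coe, id_eq]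
      by_cases hi : i ≤ N
      · rw [Finset.sum_eq_single i]
        · exact hπ_same i x hx
        · exact fun j _ hj => hπ_ne i j (Ne.symm hj) x hx
        · intro h; exact absurd (Finset.mem_range.2 (by omega)) h
      · have : x = 0 := by
          have := hN i (by omega); rw [this] at hx; simpa using hx
        simp [this]
  have hπ0_idem : ∀ x, π 0 (π 0 x) = π 0 x := fun x => hπ_same 0 _ (hπ_mem 0 x)
  -- the positive filtration
  set F := fun m : ℕ => ⨆ j ∈ {j : ℕ | m ≤ j}, p j with hFdef
  have hp_le_F : ∀ m i, m ≤ i → p i ≤ F m := fun m i hi =>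
    le_biSup (fun j => p j) (show i ∈ {j : ℕ | m ≤ j} from hi)
  have hπ0_F : ∀ x ∈ F 1, π 0 x = 0 := by
    have : F 1 ≤ LinearMap.ker (π 0) :=
      iSup₂_le fun i hi => fun x hx =>
        hπ_ne i 0 (by simp only [Set.mem_setOf_eq] at hi; omega) x hx
    exact fun x hx => this hx
  -- bilinear closure helper
  have hbil : ∀ (W : Submodule k L) (s t : Set ℕ),
      (∀ j ∈ s, ∀ i ∈ t, ∀ a ∈ p j, ∀ b ∈ p i, ⁅a, b⁆ ∈ W) →
      ∀ y ∈ (⨆ j ∈ s, p j), ∀ z ∈ (⨆ i ∈ t, p i), ⁅y, z⁆ ∈ W := by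
    intro W s t hyz y hy z hz
    rw [iSup_subtype'] at hy hz
    refine Submodule.iSup_induction _ (motive := fun y => ⁅y, z⁆ ∈ W) hy ?_ (by simp) ?_
    · rintro ⟨j, hj⟩ a ha
      refine Submodule.iSup_induction _ (motive := fun z => ⁅a, z⁆ ∈ W) hz ?_ (by simp) ?_
      · rintro ⟨i, hi⟩ b hb
        exact hyz j hj i hi a ha b hb
      · intro u v hu hv
        rw [lie_add]; exact W.add_mem hu hv
    · intro u v hu hv
      rw [add_lie]; exact W.add_mem hu hv
  have hHL : ∀ y ∈ F 1, ∀ z : L, ⁅y, z⁆ ∈ F 1 := by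
    intro y hy z
    have hz : z ∈ ⨆ i ∈ (Set.univ : Set ℕ), p i := by
      rw [iSup_univ, hsup]; trivial
    exact hbil (F 1) {j : ℕ | 1 ≤ j} Set.univ
      (fun j hj i _ a ha b hb => hp_le_F 1 (j + i) (by simp only [Set.mem_setOf_eq] at hj; omega)
        (hbracket j i a ha b hb)) y hy z hz
  have hFbot : F (N + 1) = ⊥ := by
    rw [eq_bot_iff]
    exact iSup₂_le fun j hj => by
      rw [hN j (by simpa using hj)]
  have had_F : ∀ y ∈ F 1, ∀ m, ∀ w ∈ F m, ⁅y, w⁆ ∈ F (m + 1) := by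
    intro y hy m w hw
    exact hbil (F (m + 1)) {j : ℕ | 1 ≤ j} {i : ℕ | m ≤ i}
      (fun j hj i hi a ha b hb => hp_le_F (m + 1) (j + i)
        (by simp only [Set.mem_setOf_eq] at hj hi; omega) (hbracket j i a ha b hb)) y hy w hw
  have hnil : ∀ y ∈ F 1, ((LieAlgebra.ad k L) y) ^ (N + 1) = 0 := by
    intro y hy
    have key : ∀ m : ℕ, ∀ x : L, (((LieAlgebra.ad k L) y) ^ (m + 1)) x ∈ F (m + 1) := by
      intro m
      induction m with
      | zero => intro x; simpa using hHL y hy x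
      | succ n ih =>
          intro x
          rw [pow_succ']
          exact had_F y hy (n + 1) _ (ih x)
    ext x
    have := key N x
    rw [hFbot] at this
    simpa using this
  have hnilp : ∀ y ∈ F 1, IsNilpotent ((LieAlgebra.ad k L) y) :=
    fun y hy => ⟨N + 1, hnil y hy⟩
  -- torus elements diagonalise the grading
  have hAdt : ∀ t : kˣ, ∃ g : H.G,
      H.Ad g = ∑ j ∈ Finset.range (N + 1), ((t : k) ^ j) • π j := by
    intro t
    obtain ⟨g, hg⟩ := htorus t
    refine ⟨g, hspan _ _ ?_⟩
    intro i x hx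
    simp only [LinearMap.coe_sum, Finset.sum_apply, LinearMap.smul_apply]
    by_cases hi : i ≤ N
    · rw [hg i x hx, Finset.sum_eq_single i]
      · rw [hπ_same i x hx]
      · intro j _ hj
        rw [hπ_ne i j (Ne.symm hj) x hx, smul_zero]
      · intro h; exact absurd (Finset.mem_range.2 (by omega)) h
    · have hx0 : x = 0 := by
        have := hN i (by omega); rw [this] at hx; simpa using hx
      simp [hx0]
  -- reduction to showing each invariant polynomial is constant
  rw [invPolyAlg, eq_bot_iff, Algebra.adjoin_le_iff]
  intro q hq
  simp only [Set.mem_setOf_eq] at hq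
  set B := Module.Free.chooseBasis k (Module.Dual k L) with hB
  set Φ : Module.Dual k L → k := fun ξ => MvPolynomial.eval (fun idx => B.repr ξ idx) q with hΦ
  have heval : ∀ v : Module.Dual k L, evalAt v q = Φ v := fun v => rfl
  -- invariance in the convenient form
  have hinv : ∀ (gg : H.G) (ξ : Module.Dual k L), Φ (ξ ∘ₗ H.Ad gg) = Φ ξ := by
    intro gg ξ
    have hv : (coadRep H.Ad) gg (ξ ∘ₗ H.Ad gg) = ξ := by
      ext x
      simp only [coadRep_apply, LinearMap.comp_apply]
      rw [← Module.End.mul_apply, ← map_mul, mul_inv_cancel, map_one, Module.End.one_apply]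
    have h0 := hq gg (ξ ∘ₗ H.Ad gg)
    rw [hv, heval, heval] at h0
    exact h0.symm
  -- Step A : the invariant only depends on the degree-zero component
  have hstepA : ∀ ξ : Module.Dual k L, Φ (ξ ∘ₗ π 0) = Φ ξ := by
    intro ξ
    set r : ℕ → Module.Free.ChooseBasisIndex k (Module.Dual k L) → k :=
      fun i idx => B.repr (ξ ∘ₗ π i) idx with hr
    set Q := MvPolynomial.aeval
      (fun idx => ∑ i ∈ Finset.range (N + 1), Polynomial.C (r i idx) * Polynomial.X ^ i) q
      with hQ
    have hQs : ∀ s : k, Polynomial.eval s Q =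
        MvPolynomial.eval (fun idx => ∑ i ∈ Finset.range (N + 1), s ^ i * r i idx) q :=
      fun s => auxCurveEval r (N + 1) q s
    have hQt : ∀ t : kˣ, Polynomial.eval (t : k) Q = Φ ξ := by
      intro t
      obtain ⟨g, hg⟩ := hAdt t
      have hsumrepr : ξ ∘ₗ H.Ad g = ∑ i ∈ Finset.range (N + 1), ((t : k) ^ i) • (ξ ∘ₗ π i) := by
        rw [hg]
        ext x
        simp only [LinearMap.comp_apply, LinearMap.coe_sum, Finset.sum_apply,
          LinearMap.smul_apply, map_sum, map_smul, smul_eq_mul]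
      have hcomp : (fun idx => ∑ i ∈ Finset.range (N + 1), (t : k) ^ i * r i idx) =
          fun idx => B.repr (ξ ∘ₗ H.Ad g) idx := by
        funext idx
        rw [hsumrepr, map_sum, Finsupp.finset_sum_apply]
        exact Finset.sum_congr rfl fun i _ => by rw [map_smul]; rfl
      rw [hQs, hcomp]
      exact hinv g ξ
    have hQconst : Q = Polynomial.C (Φ ξ) := by
      have hzero : Q - Polynomial.C (Φ ξ) = 0 := by
        apply Polynomial.eq_zero_of_infinite_isRoot
        apply Set.Infinite.mono (s := {t : k | t ≠ 0})
        · intro t ht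
          have : t ≠ 0 := ht
          simp only [Set.mem_setOf_eq, Polynomial.IsRoot.def, Polynomial.eval_sub,
            Polynomial.eval_C]
          have h5 := hQt (Units.mk0 t this)
          rw [Units.val_mk0] at h5
          rw [h5, sub_self]
        · have h6 : ({(0 : k)} : Set k)ᶜ.Infinite := (Set.finite_singleton 0).infinite_compl
          have h7 : ({(0 : k)} : Set k)ᶜ = {t : k | t ≠ 0} := by
            ext t; simp
          rwa [h7] at h6
      have := sub_eq_zero.1 hzero
      exact this
    have h00 : Φ (ξ ∘ₗ π 0) = Polynomial.eval 0 Q := by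
      rw [hQs 0, hΦ]
      exact congrArg (fun v => MvPolynomial.eval v q) (funext fun idx =>
        (auxSumZeroPow r (N + 1) (by omega) idx).symm)
    rw [h00, hQconst, Polynomial.eval_C]
  -- the (formal) directional derivative of the invariant
  set Dfun : Module.Dual k L → Module.Dual k L → k := fun a b =>
    ∑ idx, MvPolynomial.eval (fun jdx => B.repr a jdx) (MvPolynomial.pderiv idx q) *
      B.repr b idx with hDfun
  have hM2 : 2 ≤ Module.finrank k L + 1 := by
    have hF1ne : F 1 ≠ ⊥ := hplus_ne
    obtain ⟨v, hvF, hv0⟩ := Submodule.exists_mem_ne_zero_of_ne_bot hF1ne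
    have : Nontrivial L := nontrivial_of_ne v 0 hv0
    have := Module.finrank_pos (R := k) (M := L)
    omega
  -- Step B : vanishing of directional derivatives coming from unipotent elements
  have hstepB : ∀ (ζ : Module.Dual k L) (y : L), y ∈ F 1 → ∀ η : Module.Dual k L,
      η ∘ₗ π 0 = 0 → Dfun (ζ ∘ₗ π 0) (η ∘ₗ (LieAlgebra.ad k L) y ∘ₗ π 0) = 0 := by
    intro ζ y hy η hη
    set ξ' := ζ ∘ₗ π 0 + η with hξ'
    set w : ℕ → Module.Dual k L := fun i =>
      ((i.factorial : k)⁻¹) • (ξ' ∘ₗ (((LieAlgebra.ad k L) y) ^ i) ∘ₗ π 0) with hw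
    have hηx : ∀ x : L, η (π 0 x) = 0 := by
      intro x
      have := congrArg (fun T : L →ₗ[k] k => T x) hη
      simpa using this
    have hw0 : w 0 = ζ ∘ₗ π 0 := by
      ext x
      simp only [hw, LinearMap.smul_apply, LinearMap.comp_apply, pow_zero,
        Module.End.one_apply, Nat.factorial_zero, Nat.cast_one, inv_one, one_smul, hξ',
        LinearMap.add_apply]
      rw [hπ0_idem x, hηx x, add_zero]
    have hw1 : w 1 = η ∘ₗ (LieAlgebra.ad k L) y ∘ₗ π 0 := by
      ext x
      simp only [hw, LinearMap.smul_apply, LinearMap.comp_apply, pow_one,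
        Nat.factorial_one, Nat.cast_one, inv_one, one_smul, hξ', LinearMap.add_apply]
      have hmem : (LieAlgebra.ad k L) y ((π 0) x) ∈ F 1 := hHL y hy _
      rw [hπ0_F _ hmem, map_zero, zero_add]
    set M := Module.finrank k L + 1 with hM
    set r : ℕ → Module.Free.ChooseBasisIndex k (Module.Dual k L) → k :=
      fun i idx => B.repr (w i) idx with hr
    set Q := MvPolynomial.aeval
      (fun idx => ∑ i ∈ Finset.range M, Polynomial.C (r i idx) * Polynomial.X ^ i) q with hQ
    have hQs : ∀ s : k, Polynomial.eval s Q = Φ (∑ i ∈ Finset.range M, s ^ i • w i) := by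
      intro s
      rw [hQ, auxCurveEval]
      apply congrArg (fun v => MvPolynomial.eval v q)
      funext idx
      rw [map_sum, Finsupp.finset_sum_apply]
      exact Finset.sum_congr rfl fun i _ => by rw [map_smul]; rfl
    have hconst : ∀ s : k, Φ (∑ i ∈ Finset.range M, s ^ i • w i) = Φ ξ' := by
      intro s
      have hyF : s • y ∈ F 1 := Submodule.smul_mem _ s hy
      obtain ⟨g, hg⟩ := H.exp_mem (s • y) ⟨N + 1, hnil _ hyF⟩
      have hkey : ∑ i ∈ Finset.range M, s ^ i • w i = (ξ' ∘ₗ H.Ad g) ∘ₗ π 0 := by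
        ext x
        simp only [LinearMap.coe_sum, Finset.sum_apply, LinearMap.smul_apply,
          LinearMap.comp_apply]
        rw [hg]
        simp only [LinearMap.coe_sum, Finset.sum_apply, LinearMap.smul_apply, map_sum,
          map_smul, smul_eq_mul]
        refine Finset.sum_congr rfl fun i _ => ?_
        have had : (LieAlgebra.ad k L) (s • y) = s • (LieAlgebra.ad k L) y :=
          map_smul _ s y
        rw [smul_pow]
        simp only [hw, LinearMap.smul_apply, LinearMap.comp_apply, map_smul, smul_eq_mul]
        ring
      rw [hkey, hstepA (ξ' ∘ₗ H.Ad g), hinv g ξ']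
    have hQC : Q = Polynomial.C (Φ ξ') := by
      apply Polynomial.funext
      intro s
      rw [hQs, hconst, Polynomial.eval_C]
    have hd : Polynomial.eval 0 (Polynomial.derivative Q) = 0 := by
      rw [hQC]
      simp
    rw [hQ, auxDerivZero r M hM2 q] at hd
    rw [hDfun, ← hw0, ← hw1]
    exact hd
  -- linear form of the directional derivative
  have hlin : ∀ a : Module.Dual k L, ∃ T : Module.Dual k L →ₗ[k] k,
      ∀ b, T b = Dfun a b := by
    intro a
    refine ⟨∑ idx, MvPolynomial.eval (fun jdx => B.repr a jdx) (MvPolynomial.pderiv idx q) •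
      B.coord idx, fun b => ?_⟩
    simp only [hDfun, LinearMap.coe_sum, Finset.sum_apply, LinearMap.smul_apply,
      Module.Basis.coord_apply, smul_eq_mul]
  -- spanning : every element of the degree-zero dual is spanned by derivative directions
  set Bset : Set (Module.Dual k L) := {w | ∃ y ∈ F 1, ∃ η : Module.Dual k L,
    η ∘ₗ π 0 = 0 ∧ w = η ∘ₗ (LieAlgebra.ad k L) y ∘ₗ π 0} with hBsetdef
  have hspanB : ∀ ξ : Module.Dual k L, ξ ∘ₗ π 0 ∈ Submodule.span k Bset := by
    intro ξ
    have hW := Subspace.dualCoannihilator_dualAnnihilator_eq (W := Submodule.span k Bset)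
    rw [← hW, Submodule.mem_dualAnnihilator]
    intro x hx
    rw [Submodule.mem_dualCoannihilator] at hx
    have hπ0x : π 0 x = 0 := by
      by_contra hne
      have h8 : ¬ ∀ y ∈ F 1, ⁅π 0 x, y⁆ = 0 :=
        fun hall => hne (hfaithful (π 0 x) (hπ_mem 0 x) hall)
      push_neg at h8
      obtain ⟨y, hy, hbr⟩ := h8
      have hv0 : ⁅y, π 0 x⁆ ≠ 0 := fun h0 => hbr (by rw [← lie_skew, h0, neg_zero])
      have hvF : ⁅y, π 0 x⁆ ∈ F 1 := hHL y hy (π 0 x)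
      have hvnp : ⁅y, π 0 x⁆ ∉ p 0 := by
        intro hvp
        have hF1le : F 1 ≤ ⨆ j ∈ {j : ℕ | j ≠ 0}, p j :=
          iSup₂_le fun j hj => le_biSup (fun j => p j)
            (show j ∈ {j : ℕ | j ≠ 0} by simp only [Set.mem_setOf_eq] at hj ⊢; omega)
        exact hv0 ((Submodule.mem_bot k).1
          ((hindep 0).le_bot ⟨hvp, hF1le hvF⟩))
      have hmkv : (Submodule.Quotient.mk ⁅y, π 0 x⁆ : L ⧸ p 0) ≠ 0 := by
        rwa [ne_eq, Submodule.Quotient.mk_eq_zero]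
      obtain ⟨φ, hφ⟩ : ∃ φ : Module.Dual k (L ⧸ p 0),
          φ (Submodule.Quotient.mk ⁅y, π 0 x⁆) ≠ 0 := by
        by_contra hc
        push_neg at hc
        exact hmkv ((Module.forall_dual_apply_eq_zero_iff k _).1 hc)
      have hη0 : (φ ∘ₗ (p 0).mkQ) ∘ₗ π 0 = 0 := by
        ext z
        simp only [LinearMap.comp_apply, Submodule.mkQ_apply, LinearMap.zero_apply]
        rw [(Submodule.Quotient.mk_eq_zero _).2 (hπ_mem 0 z), map_zero]
      have hmem : (φ ∘ₗ (p 0).mkQ) ∘ₗ (LieAlgebra.ad k L) y ∘ₗ π 0 ∈ Bset :=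
        ⟨y, hy, φ ∘ₗ (p 0).mkQ, hη0, rfl⟩
      have hzero := hx _ (Submodule.subset_span hmem)
      apply hφ
      simpa only [LinearMap.comp_apply, Submodule.mkQ_apply, LieAlgebra.ad_apply] using hzero
    show (ξ ∘ₗ π 0) x = 0
    rw [LinearMap.comp_apply, hπ0x, map_zero]
  -- the invariant is constant on the degree-zero duals
  have hconstV0 : ∀ ξ : Module.Dual k L, Φ (ξ ∘ₗ π 0) = Φ 0 := by
    intro ξ
    set α := ξ ∘ₗ π 0 with hα
    set r : ℕ → Module.Free.ChooseBasisIndex k (Module.Dual k L) → k :=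
      fun i idx => if i = 1 then B.repr α idx else 0 with hrl
    set Q := MvPolynomial.aeval
      (fun idx => ∑ i ∈ Finset.range 2, Polynomial.C (r i idx) * Polynomial.X ^ i) q with hQl
    have hcrsmul : ∀ s : k, (fun jdx => r 0 jdx + s * r 1 jdx) =
        fun jdx => B.repr (s • α) jdx := by
      intro s
      funext jdx
      have h0 : r 0 jdx = 0 := by simp [hrl]
      have h1 : r 1 jdx = B.repr α jdx := by simp [hrl]
      rw [h0, h1, zero_add, map_smul, Finsupp.smul_apply, smul_eq_mul]
    have hQs : ∀ s : k, Polynomial.eval s Q = Φ (s • α) := by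
      intro s
      rw [hQl, auxCurveEval]
      apply congrArg (fun v => MvPolynomial.eval v q)
      funext idx
      rw [Finset.sum_range_succ, Finset.sum_range_one]
      have h3 := congrFun (hcrsmul s) idx
      rw [pow_zero, one_mul, pow_one]
      exact h3
    have hDzero : ∀ s : k, Dfun (s • α) α = 0 := by
      intro s
      obtain ⟨T, hT⟩ := hlin (s • α)
      have hker : Submodule.span k Bset ≤ LinearMap.ker T := by
        rw [Submodule.span_le]
        rintro b ⟨y, hy, η, hη0, rfl⟩
        have hsm : s • α = (s • ξ) ∘ₗ π 0 := by
          ext z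
          simp [hα]
        rw [SetLike.mem_coe, LinearMap.mem_ker, hT, hsm]
        exact hstepB (s • ξ) y hy η hη0
      have hTα : T α = 0 := hker (hspanB ξ)
      rw [← hT]
      exact hTα
    have hderiv : Polynomial.derivative Q = 0 := by
      apply Polynomial.funext
      intro s
      rw [Polynomial.eval_zero, hQl, auxDerivLinear r q s, hcrsmul s]
      have hr1 : ∀ idx, r 1 idx = B.repr α idx := fun idx => if_pos rfl
      rw [show ∑ idx, MvPolynomial.eval (fun jdx => B.repr (s • α) jdx)
            (MvPolynomial.pderiv idx q) * r 1 idx = Dfun (s • α) α from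
          Finset.sum_congr rfl fun idx _ => by rw [hr1 idx]]
      exact hDzero s
    have hQC : Q = Polynomial.C (Q.coeff 0) := Polynomial.eq_C_of_derivative_eq_zero hderiv
    have h1 : Φ α = Polynomial.eval 1 Q := by rw [hQs 1, one_smul]
    have h0 : Polynomial.eval 0 Q = Φ 0 := by rw [hQs 0, zero_smul]
    rw [hQC] at h1 h0
    rw [Polynomial.eval_C] at h1 h0
    rw [h1, h0]
  -- conclusion : the invariant polynomial is a constant
  have hqC : q = MvPolynomial.C (Φ 0) := by
    apply MvPolynomial.funext
    intro x
    have hcrd : (fun idx => B.repr (B.equivFun.symm x) idx) = x := by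
      funext idx
      have := B.equivFun.apply_symm_apply x
      have h2 := congrFun this idx
      rw [← h2]
      rfl
    have hevx : MvPolynomial.eval x q = Φ (B.equivFun.symm x) :=
      congrArg (fun v => MvPolynomial.eval v q) hcrd.symm
    rw [hevx, ← hstepA (B.equivFun.symm x), hconstV0 (B.equivFun.symm x),
      MvPolynomial.eval_C]
  rw [SetLike.mem_coe, Algebra.mem_bot]
  exact ⟨Φ 0, by rw [MvPolynomial.algebraMap_eq, ← hqC]⟩




end
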